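/- Let m ≥ 0, ν be integers and λ a nonzero zero of L_{m,ν}. Then the derivative satisfies L_{m,ν}'(λ) = J_ν(λ) J_{ν-m}(λ) · ( J_ν'(λ)²/J_ν(λ)² + J_{ν-m}'(λ)²/J_{ν-m}(λ)² + 2 - ((ν-m)² + ν²)/λ² ). In particular, combined with the positivity of the right-hand side for real λ ≠ 0, every nonzero real zero of L_{m,ν} is simple. -/

import Mathlib

open scoped Nat
open Asymptotics MeasureTheory

noncomputable def besselJNat (n : ℕ) (z : ℂ) : ℂ :=
  ∑' r : ℕ, ((-1) ^ r / ((Nat.factorial r : ℂ) * (Nat.factorial (n + r) : ℂ))) * (z / 2) ^ (n + 2 * r)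

/-- Bessel function of the first kind of integer order, with `J_{-n} = (-1)^n J_n`. -/
noncomputable def besselJ (n : ℤ) (z : ℂ) : ℂ :=
  if 0 ≤ n then besselJNat n.toNat z else (-1 : ℂ) ^ n * besselJNat (-n).toNat z

/-- `L_{m,ν}(z) = J_{ν+1}(z) J_{ν-m}(z) - J_ν(z) J_{ν-m-1}(z)`. -/
noncomputable def besselL (m : ℕ) (ν : ℤ) (z : ℂ) : ℂ :=
  besselJ (ν + 1) z * besselJ (ν - m) z - besselJ ν z * besselJ (ν - m - 1) z

/-- `L_{m,ν}(z) = -z^m (d/dz)(z^{-m} J_ν(z) J_{ν-m}(z))`. -/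
noncomputable def besselLd (m : ℕ) (ν : ℤ) (z : ℂ) : ℂ :=
  -z ^ m * deriv (fun w : ℂ => w ^ (-(m : ℤ)) * (besselJ ν w * besselJ (ν - m) w)) z

noncomputable def bc (n r : ℕ) : ℂ := (-1) ^ r / ((r ! : ℂ) * ((n + r)! : ℂ))

lemma besselJNat_eq (n : ℕ) (z : ℂ) : besselJNat n z = ∑' r, bc n r * (z / 2) ^ (n + 2 * r) := rfl

lemma norm_bc_le (n r : ℕ) : ‖bc n r‖ ≤ 1 / r ! := by
  have h1 : (1:ℝ) ≤ ((n+r)! : ℝ) := by exact_mod_cast Nat.one_le_iff_ne_zero.2 (Nat.factorial_ne_zero _)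
  have h2 : (0:ℝ) < (r ! : ℝ) := by exact_mod_cast Nat.factorial_pos r
  rw [bc, norm_div, norm_mul]
  simp only [norm_pow, norm_neg, norm_one, one_pow, Complex.norm_natCast]
  rw [div_le_div_iff₀ (by positivity) h2]
  nlinarith

lemma summable_mul_pow_div_factorial (x : ℝ) : Summable (fun r : ℕ => (r : ℝ) * x ^ r / r !) := by
  rw [← summable_nat_add_iff 1]
  have h := (Real.summable_pow_div_factorial x).mul_left x
  refine h.congr fun s => ?_
  have h2 : ((s+1)! : ℝ) = (s+1) * s ! := by exact_mod_cast Nat.factorial_succ s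
  field_simp [h2]
  rw [h2]; push_cast; ring

lemma summable_weighted (n : ℕ) (C : ℝ) (x : ℝ) :
    Summable (fun r : ℕ => ((n : ℝ) + 2 * r) * C * x ^ r / r !) := by
  have h1 := (Real.summable_pow_div_factorial x).mul_left ((n : ℝ) * C)
  have h2 := (summable_mul_pow_div_factorial x).mul_left (2 * C)
  refine (h1.add h2).congr fun r => ?_
  field_simp

lemma summable_besselTerm (n : ℕ) (w : ℂ) :
    Summable (fun r : ℕ => bc n r * w ^ (n + 2 * r)) := by
  refine Summable.of_norm (((Real.summable_pow_div_factorial (‖w‖^2)).mul_left (‖w‖^n)).of_nonneg_of_le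
    (fun r => norm_nonneg _) fun r => ?_)
  rw [norm_mul, norm_pow, pow_add, pow_mul]
  calc ‖bc n r‖ * (‖w‖ ^ n * (‖w‖ ^ 2) ^ r) ≤ (1 / r !) * (‖w‖ ^ n * (‖w‖ ^ 2) ^ r) := by
        exact mul_le_mul_of_nonneg_right (norm_bc_le n r) (by positivity)
    _ = ‖w‖ ^ n * ((‖w‖ ^ 2) ^ r / r !) := by ring

lemma summable_besselTerm' (n : ℕ) (w : ℂ) :
    Summable (fun r : ℕ => ((n + 2 * r : ℕ) : ℂ) * bc n r * w ^ (n + 2 * r)) := by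
  refine Summable.of_norm ((summable_weighted n (‖w‖^n) (‖w‖^2)).of_nonneg_of_le
    (fun r => norm_nonneg _) fun r => ?_)
  rw [norm_mul, norm_mul, norm_pow, pow_add, pow_mul, Complex.norm_natCast]
  push_cast
  calc ((n : ℝ) + 2*r) * ‖bc n r‖ * (‖w‖ ^ n * (‖w‖ ^ 2) ^ r)
      ≤ ((n : ℝ) + 2*r) * (1 / r !) * (‖w‖ ^ n * (‖w‖ ^ 2) ^ r) := by
        refine mul_le_mul_of_nonneg_right (mul_le_mul_of_nonneg_left (norm_bc_le n r) (by positivity)) (by positivity)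
    _ = ((n : ℝ) + 2 * r) * ‖w‖ ^ n * (‖w‖ ^ 2) ^ r / r ! := by ring

/-- derivative of a single term -/
lemma hasDerivAt_term (n r : ℕ) (c : ℂ) (z : ℂ) :
    HasDerivAt (fun y : ℂ => c * (y / 2) ^ (n + 2 * r))
      (c * ((n + 2 * r : ℕ) : ℂ) / 2 * (z / 2) ^ (n + 2 * r - 1)) z := by
  have h1 : HasDerivAt (fun y : ℂ => y / 2) (1 / 2 : ℂ) z := by
    simpa using (hasDerivAt_id z).div_const 2
  have h2 := (hasDerivAt_pow (n + 2 * r) (z / 2)).comp z h1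
  have h3 := h2.const_mul c
  refine h3.congr_deriv ?_
  ring

lemma norm_term_deriv_le (n r : ℕ) (R : ℝ) (hR : 1 ≤ R) (y : ℂ) (hy : ‖y‖ ≤ R) :
    ‖bc n r * ((n + 2 * r : ℕ) : ℂ) / 2 * (y / 2) ^ (n + 2 * r - 1)‖ ≤
      ((n : ℝ) + 2 * r) * R ^ n * (R ^ 2) ^ r / r ! := by
  have hR0 : (0:ℝ) < R := lt_of_lt_of_le one_pos hR
  have hy2 : ‖y / 2‖ ≤ R := by
    rw [norm_div]
    simp only [Complex.norm_ofNat]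
    nlinarith [norm_nonneg y]
  have hpow : ‖(y / 2) ^ (n + 2 * r - 1)‖ ≤ R ^ (n + 2 * r) := by
    rw [norm_pow]
    calc ‖y / 2‖ ^ (n + 2 * r - 1) ≤ R ^ (n + 2 * r - 1) :=
          pow_le_pow_left₀ (norm_nonneg _) hy2 _
      _ ≤ R ^ (n + 2 * r) := pow_le_pow_right₀ hR (Nat.sub_le _ _)
  rw [norm_mul, norm_div]
  simp only [Complex.norm_ofNat, norm_mul, Complex.norm_natCast]
  have hb := norm_bc_le n r
  have h1 : ‖bc n r‖ * ((n + 2*r : ℕ):ℝ) / 2 ≤ ((n:ℝ) + 2*r) / r ! := by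
    push_cast
    have hf : (0:ℝ) < r ! := by exact_mod_cast Nat.factorial_pos r
    have hb' : ‖bc n r‖ * r ! ≤ 1 := by
      rw [← le_div_iff₀ hf]; exact hb
    rw [div_le_div_iff₀ (by norm_num) hf]
    nlinarith [norm_nonneg (bc n r), hf, mul_nonneg (norm_nonneg (bc n r)) hf.le]
  calc ‖bc n r‖ * ((n + 2*r : ℕ):ℝ) / 2 * ‖(y / 2) ^ (n + 2 * r - 1)‖
      ≤ (((n:ℝ) + 2*r) / r !) * R ^ (n + 2 * r) := by
        exact mul_le_mul h1 hpow (norm_nonneg _) (by positivity)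
    _ = ((n : ℝ) + 2 * r) * R ^ n * (R ^ 2) ^ r / r ! := by
        rw [pow_add, pow_mul]; ring

lemma hasDerivAt_besselJNat (n : ℕ) (z : ℂ) :
    HasDerivAt (besselJNat n)
      (∑' r : ℕ, bc n r * ((n + 2 * r : ℕ) : ℂ) / 2 * (z / 2) ^ (n + 2 * r - 1)) z := by
  set R : ℝ := ‖z‖ + 1 with hRdef
  have hR : 1 ≤ R := by have := norm_nonneg z; simp only [hRdef]; linarith
  have hball : z ∈ Metric.ball (0:ℂ) R := by
    rw [Metric.mem_ball, dist_zero_right, hRdef]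
    linarith
  have key : HasDerivAt (fun y : ℂ => ∑' r : ℕ, bc n r * (y / 2) ^ (n + 2 * r))
      (∑' r : ℕ, bc n r * ((n + 2 * r : ℕ) : ℂ) / 2 * (z / 2) ^ (n + 2 * r - 1)) z := by
    refine hasDerivAt_tsum_of_isPreconnected
      (u := fun r : ℕ => ((n : ℝ) + 2 * r) * R ^ n * (R ^ 2) ^ r / r !)
      (summable_weighted n (R ^ n) (R ^ 2)) Metric.isOpen_ball
      (convex_ball (0:ℂ) R).isPreconnected
      (fun r y _ => hasDerivAt_term n r (bc n r) y)
      (fun r y hy => norm_term_deriv_le n r R hR y ?_) hball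
      (summable_besselTerm n (z / 2)) hball
    have := Metric.mem_ball.1 hy
    rw [dist_zero_right] at this
    linarith
  exact key

lemma fact_cast_ne (k : ℕ) : ((k ! : ℂ)) ≠ 0 := by
  exact_mod_cast Nat.factorial_ne_zero k

lemma bc_shift (n s : ℕ) : ((2 * (s+1) : ℕ) : ℂ) * bc n (s+1) = -2 * bc (n+1) s := by
  have e : (n+1) + s = n + (s+1) := by omega
  rw [bc, bc, e]
  have h1 : (((s+1)! : ℕ) : ℂ) = (s+1) * (s ! : ℕ) := by exact_mod_cast Nat.factorial_succ s
  rw [h1]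
  have h2 : ((s:ℂ)+1) ≠ 0 := Nat.cast_add_one_ne_zero s
  field_simp [fact_cast_ne]
  push_cast
  ring

lemma bc_threeterm (n s : ℕ) :
    ((n:ℂ)+1) * bc (n+1) (s+1) - bc n (s+1) = bc (n+2) s := by
  have e1 : (n+1) + (s+1) = (n + (s+1)) + 1 := by omega
  have e2 : (n+2) + s = (n + (s+1)) + 1 := by omega
  rw [bc, bc, bc, e1, e2]
  set t := n + (s+1) with ht
  have h1 : (((s+1)! : ℕ) : ℂ) = ((s:ℂ)+1) * (s ! : ℕ) := by exact_mod_cast Nat.factorial_succ s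
  have h2 : (((t+1)! : ℕ) : ℂ) = ((t:ℂ)+1) * (t ! : ℕ) := by exact_mod_cast Nat.factorial_succ t
  rw [h1, h2]
  have h3 : ((s:ℂ)+1) ≠ 0 := Nat.cast_add_one_ne_zero s
  have h4 : ((t:ℂ)+1) ≠ 0 := Nat.cast_add_one_ne_zero t
  have h5 : (t:ℂ) = (n:ℂ) + (s:ℂ) + 1 := by rw [ht]; push_cast; ring
  field_simp [fact_cast_ne]
  rw [h5]
  push_cast
  ring

lemma bc_threeterm0 (n : ℕ) : ((n:ℂ)+1) * bc (n+1) 0 - bc n 0 = 0 := by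
  rw [bc, bc]
  simp only [pow_zero, Nat.add_zero]
  have h2 : (((n+1)! : ℕ) : ℂ) = ((n:ℂ)+1) * (n ! : ℕ) := by exact_mod_cast Nat.factorial_succ n
  rw [Nat.factorial_zero, h2]
  have h4 : ((n:ℂ)+1) ≠ 0 := Nat.cast_add_one_ne_zero n
  field_simp [fact_cast_ne, h4]
  simp

lemma zmul_pow (z : ℂ) (j : ℕ) : z * (z/2)^(j+1) = 2 * (z/2)^(j+2) := by
  rw [pow_succ (z/2) (j+1)]
  ring

lemma keyA (n : ℕ) (z : ℂ) :
    (∑' r : ℕ, ((n + 2*r : ℕ) : ℂ) * bc n r * (z/2)^(n+2*r)) =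
      (n:ℂ) * besselJNat n z - z * besselJNat (n+1) z := by
  have hs1 : Summable (fun r : ℕ => ((n + 2*r : ℕ) : ℂ) * bc n r * (z/2)^(n+2*r)) :=
    summable_besselTerm' n (z/2)
  have hs0 : Summable (fun r : ℕ => (n:ℂ) * (bc n r * (z/2)^(n+2*r))) :=
    (summable_besselTerm n (z/2)).mul_left _
  have hdiff : ∀ r : ℕ, ((n + 2*r : ℕ) : ℂ) * bc n r * (z/2)^(n+2*r)
      - (n:ℂ) * (bc n r * (z/2)^(n+2*r)) = ((2*r : ℕ) : ℂ) * bc n r * (z/2)^(n+2*r) := by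
    intro r; push_cast; ring
  have hsh : Summable (fun r : ℕ => ((2*r : ℕ) : ℂ) * bc n r * (z/2)^(n+2*r)) := by
    refine (hs1.sub hs0).congr fun r => (hdiff r)
  have hterm : ∀ s : ℕ, ((2*(s+1) : ℕ) : ℂ) * bc n (s+1) * (z/2)^(n+2*(s+1)) =
      (-z) * (bc (n+1) s * (z/2)^((n+1)+2*s)) := by
    intro s
    rw [bc_shift n s]
    have e : (n+1) + 2*s = (n + 2*s) + 1 := by omega
    have e2 : n + 2*(s+1) = (n + 2*s) + 2 := by omega
    rw [e, e2]
    have := zmul_pow z (n + 2*s)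
    calc -2 * bc (n+1) s * (z/2)^((n+2*s)+2) = -(bc (n+1) s) * (2 * (z/2)^((n+2*s)+2)) := by ring
      _ = -(bc (n+1) s) * (z * (z/2)^((n+2*s)+1)) := by rw [← this]
      _ = -z * (bc (n+1) s * (z/2)^((n+2*s)+1)) := by ring
  have hsum : (∑' r : ℕ, ((2*r : ℕ) : ℂ) * bc n r * (z/2)^(n+2*r)) = (-z) * besselJNat (n+1) z := by
    rw [Summable.tsum_eq_zero_add hsh]
    simp only [Nat.mul_zero, Nat.cast_zero, zero_mul]
    rw [tsum_congr hterm, tsum_mul_left, besselJNat_eq]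
    ring
  calc (∑' r : ℕ, ((n + 2*r : ℕ) : ℂ) * bc n r * (z/2)^(n+2*r))
      = ∑' r : ℕ, ((n:ℂ) * (bc n r * (z/2)^(n+2*r)) + ((2*r : ℕ) : ℂ) * bc n r * (z/2)^(n+2*r)) := by
        refine tsum_congr fun r => ?_
        rw [← hdiff r]; ring
    _ = (n:ℂ) * besselJNat n z + (-z) * besselJNat (n+1) z := by
        rw [Summable.tsum_add hs0 hsh, hsum, tsum_mul_left, ← besselJNat_eq]
    _ = (n:ℂ) * besselJNat n z - z * besselJNat (n+1) z := by ring

lemma keyB (n : ℕ) (z : ℂ) :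
    z * besselJNat n z + z * besselJNat (n+2) z = 2*((n:ℂ)+1) * besselJNat (n+1) z := by
  have hsJ : ∀ m : ℕ, Summable (fun r : ℕ => bc m r * (z/2)^(m+2*r)) :=
    fun m => summable_besselTerm m (z/2)
  have hsf : Summable (fun r : ℕ => 2*((n:ℂ)+1) * (bc (n+1) r * (z/2)^((n+1)+2*r))) :=
    (hsJ (n+1)).mul_left _
  have hsg : Summable (fun r : ℕ => z * (bc n r * (z/2)^(n+2*r))) := (hsJ n).mul_left _
  -- difference function
  set h : ℕ → ℂ := fun r => 2*((n:ℂ)+1) * (bc (n+1) r * (z/2)^((n+1)+2*r))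
      - z * (bc n r * (z/2)^(n+2*r)) with hh
  have hsh : Summable h := hsf.sub hsg
  have h0 : h 0 = 0 := by
    have e : (n+1) + 2*0 = (n + 2*0) + 1 := by omega
    simp only [hh, e]
    have hz := zmul_pow z (n + 2*0 - 1)
    -- rewrite z * (z/2)^(n+1)?? handle directly
    have e2 : z * (z/2)^(n+2*0) * ((n:ℂ)+1) = ((n:ℂ)+1) * (z * (z/2)^(n)) := by
      simp; ring
    have key0 := bc_threeterm0 n
    -- h 0 = (z/2)^n * z stuff
    have ezp : (z/2)^((n+2*0)+1) = (z/2)^(n+2*0) * (z/2) := pow_succ _ _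
    rw [ezp]
    simp only [Nat.mul_zero, Nat.add_zero]
    have : 2*((n:ℂ)+1) * (bc (n+1) 0 * ((z/2)^n * (z/2))) - z * (bc n 0 * (z/2)^n)
        = (((n:ℂ)+1) * bc (n+1) 0 - bc n 0) * (z * (z/2)^n) := by ring
    rw [this, key0, zero_mul]
  have hterm : ∀ s : ℕ, h (s+1) = z * (bc (n+2) s * (z/2)^((n+2)+2*s)) := by
    intro s
    have e1 : (n+1) + 2*(s+1) = ((n+1) + 2*s) + 2 := by omega
    have e2 : n + 2*(s+1) = ((n+1) + 2*s) + 1 := by omega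
    have e3 : (n+2) + 2*s = ((n+1)+2*s) + 1 := by omega
    simp only [hh, e1, e2, e3]
    set j := (n+1) + 2*s with hj
    have hz := zmul_pow z j
    calc 2*((n:ℂ)+1) * (bc (n+1) (s+1) * (z/2)^(j+2)) - z * (bc n (s+1) * (z/2)^(j+1))
        = 2*((n:ℂ)+1) * (bc (n+1) (s+1) * (z/2)^(j+2)) - bc n (s+1) * (z * (z/2)^(j+1)) := by ring
      _ = 2*((n:ℂ)+1) * (bc (n+1) (s+1) * (z/2)^(j+2)) - bc n (s+1) * (2 * (z/2)^(j+2)) := by rw [hz]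
      _ = (((n:ℂ)+1) * bc (n+1) (s+1) - bc n (s+1)) * (2 * (z/2)^(j+2)) := by ring
      _ = bc (n+2) s * (2 * (z/2)^(j+2)) := by rw [bc_threeterm]
      _ = bc (n+2) s * (z * (z/2)^(j+1)) := by rw [hz]
      _ = z * (bc (n+2) s * (z/2)^(j+1)) := by ring
  have hsum : ∑' r, h r = z * besselJNat (n+2) z := by
    rw [Summable.tsum_eq_zero_add hsh, h0, zero_add, tsum_congr hterm, tsum_mul_left, ← besselJNat_eq]
  have : ∑' r, h r = 2*((n:ℂ)+1) * besselJNat (n+1) z - z * besselJNat n z := by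
    rw [hh, Summable.tsum_sub hsf hsg, tsum_mul_left, tsum_mul_left, ← besselJNat_eq, ← besselJNat_eq]
  rw [hsum] at this
  linear_combination this

noncomputable def besselJX (n : ℤ) (z : ℂ) : ℂ :=
  if 0 ≤ n then besselJNat n.toNat z else (-1 : ℂ) ^ n * besselJNat (-n).toNat z

noncomputable def Jd (n : ℤ) (z : ℂ) : ℂ := (n:ℂ)/z * besselJX n z - besselJX (n+1) z

lemma besselJX_coe (n : ℕ) : besselJX (n:ℤ) = besselJNat n := by
  funext z
  simp [besselJX]

lemma neg_one_zpow_sq (n : ℤ) : ((-1:ℂ)^n) * ((-1:ℂ)^n) = 1 := by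
  rw [← zpow_add₀ (by norm_num : (-1:ℂ) ≠ 0)]
  have : n + n = 2 * n := by ring
  rw [this, zpow_mul]
  norm_num

lemma neg_one_zpow_neg (n : ℤ) : ((-1:ℂ)^(-n)) = (-1:ℂ)^n := by
  rw [zpow_neg]
  exact inv_eq_of_mul_eq_one_right (neg_one_zpow_sq n)

lemma neg_one_zpow_succ (n : ℤ) : ((-1:ℂ)^(n+1)) = -((-1:ℂ)^n) := by
  rw [zpow_add₀ (by norm_num : (-1:ℂ) ≠ 0)]
  simp

lemma besselJX_neg (n : ℤ) (z : ℂ) : besselJX (-n) z = (-1:ℂ)^n * besselJX n z := by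
  rcases lt_trichotomy n 0 with h | h | h
  · have h1 : 0 ≤ -n := by omega
    have h2 : ¬ (0 ≤ n) := by omega
    simp only [besselJX, if_pos h1, if_neg h2]
    rw [← mul_assoc, neg_one_zpow_sq, one_mul]
  · subst h; simp [besselJX]
  · have h1 : ¬ (0 ≤ -n) := by omega
    have h2 : 0 ≤ n := by omega
    simp only [besselJX, if_pos h2, if_neg h1, neg_neg, neg_one_zpow_neg]

lemma besselJX_threeterm (ν : ℤ) (z : ℂ) (hz : z ≠ 0) :
    besselJX (ν-1) z + besselJX (ν+1) z = 2*(ν:ℂ)/z * besselJX ν z := by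
  have main : ∀ n : ℕ, besselJX ((n:ℤ)) z + besselJX ((n:ℤ)+2) z
      = 2*((n:ℂ)+1)/z * besselJX ((n:ℤ)+1) z := by
    intro n
    have e1 : ((n:ℤ)+2) = ((n+2 : ℕ) : ℤ) := by push_cast; ring
    have e2 : ((n:ℤ)+1) = ((n+1 : ℕ) : ℤ) := by push_cast; ring
    rw [e1, e2, besselJX_coe, besselJX_coe, besselJX_coe]
    have := keyB n z
    field_simp
    linear_combination this
  rcases lt_trichotomy ν 0 with h | h | h
  · -- ν ≤ -1 : use positive case at μ = -ν
    set μ : ℤ := -ν with hμ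
    have hμ1 : 1 ≤ μ := by omega
    obtain ⟨n, hn⟩ : ∃ n : ℕ, μ = (n:ℤ)+1 := ⟨(μ-1).toNat, by omega⟩
    have hpos := main n
    have e1 : ν - 1 = -((n:ℤ)+2) := by omega
    have e2 : ν + 1 = -((n:ℤ)) := by omega
    have e3 : ν = -((n:ℤ)+1) := by omega
    rw [e1, e2, e3, besselJX_neg, besselJX_neg, besselJX_neg]
    have s1 : ((-1:ℂ)^((n:ℤ)+2)) = (-1:ℂ)^((n:ℤ)) := by
      rw [show (n:ℤ)+2 = ((n:ℤ)+1)+1 by ring, neg_one_zpow_succ ((n:ℤ)+1), neg_one_zpow_succ (n:ℤ)]; ring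
    have s2 : ((-1:ℂ)^((n:ℤ)+1)) = -((-1:ℂ)^((n:ℤ))) := neg_one_zpow_succ _
    rw [s1, s2]
    have : ((-((n:ℤ)+1) : ℤ) : ℂ) = -((n:ℂ)+1) := by push_cast; ring
    rw [this]
    calc (-1:ℂ)^((n:ℤ)) * besselJX ((n:ℤ)+2) z + (-1:ℂ)^((n:ℤ)) * besselJX ((n:ℤ)) z
        = (-1:ℂ)^((n:ℤ)) * (besselJX ((n:ℤ)) z + besselJX ((n:ℤ)+2) z) := by ring
      _ = (-1:ℂ)^((n:ℤ)) * (2*((n:ℂ)+1)/z * besselJX ((n:ℤ)+1) z) := by rw [hpos]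
      _ = 2 * -((n:ℂ)+1) / z * (-(-1:ℂ)^((n:ℤ)) * besselJX ((n:ℤ)+1) z) := by ring
  · subst h
    have e1 : (0:ℤ) - 1 = -(1:ℤ) := by ring
    rw [e1, besselJX_neg]
    simp only [Int.cast_zero]
    have : ((-1:ℂ)^((1:ℤ))) = -1 := by norm_num
    rw [this]
    ring
  · obtain ⟨n, hn⟩ : ∃ n : ℕ, ν = (n:ℤ)+1 := ⟨(ν-1).toNat, by omega⟩
    subst hn
    have e1 : (n:ℤ) + 1 - 1 = (n:ℤ) := by ring
    have e2 : (n:ℤ) + 1 + 1 = (n:ℤ) + 2 := by ring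
    rw [e1, e2]
    have := main n
    rw [this]
    push_cast
    ring

lemma zmul_pow' (z : ℂ) (j : ℕ) : z * (z/2)^j = 2 * (z/2)^(j+1) := by
  rw [pow_succ]
  ring

lemma hasDerivAt_besselJNat' (n : ℕ) (z : ℂ) (hz : z ≠ 0) :
    HasDerivAt (besselJNat n) ((n:ℂ)/z * besselJNat n z - besselJNat (n+1) z) z := by
  have h := hasDerivAt_besselJNat n z
  have hlink : z * (∑' r : ℕ, bc n r * ((n + 2 * r : ℕ) : ℂ) / 2 * (z / 2) ^ (n + 2 * r - 1))
      = ∑' r : ℕ, ((n + 2*r : ℕ) : ℂ) * bc n r * (z/2)^(n+2*r) := by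
    rw [← tsum_mul_left]
    refine tsum_congr fun r => ?_
    rcases Nat.eq_zero_or_pos (n + 2*r) with h0 | hpos
    · rw [h0]; simp
    · obtain ⟨j, hj⟩ := Nat.exists_eq_add_of_lt hpos
      rw [show n + 2*r = j + 1 by omega]
      simp only [Nat.add_sub_cancel]
      have := zmul_pow' z j
      calc z * (bc n r * ((j+1 : ℕ) : ℂ) / 2 * (z/2)^j)
          = bc n r * ((j+1 : ℕ) : ℂ) / 2 * (z * (z/2)^j) := by ring
        _ = bc n r * ((j+1 : ℕ) : ℂ) / 2 * (2 * (z/2)^(j+1)) := by rw [this]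
        _ = ((j+1 : ℕ) : ℂ) * bc n r * (z/2)^(j+1) := by push_cast; ring
  rw [keyA n z] at hlink
  have hval : (∑' r : ℕ, bc n r * ((n + 2 * r : ℕ) : ℂ) / 2 * (z / 2) ^ (n + 2 * r - 1))
      = (n:ℂ)/z * besselJNat n z - besselJNat (n+1) z := by
    have := hlink
    field_simp at this ⊢
    linear_combination this
  rwa [hval] at h

lemma differentiable_besselJNat (n : ℕ) : Differentiable ℂ (besselJNat n) :=
  fun z => (hasDerivAt_besselJNat n z).differentiableAt

lemma differentiable_besselJX (n : ℤ) : Differentiable ℂ (besselJX n) := by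
  rcases le_or_gt 0 n with h | h
  · have : besselJX n = besselJNat n.toNat := by
      funext z; simp [besselJX, if_pos h]
    rw [this]; exact differentiable_besselJNat _
  · have : besselJX n = fun z => (-1:ℂ)^n * besselJNat (-n).toNat z := by
      funext z; simp [besselJX, not_le.2 h]
    rw [this]
    exact (differentiable_besselJNat _).const_mul _

lemma Jd_alt (ν : ℤ) (z : ℂ) (hz : z ≠ 0) :
    Jd ν z = besselJX (ν-1) z - (ν:ℂ)/z * besselJX ν z := by
  have h := besselJX_threeterm ν z hz
  rw [Jd]
  field_simp at h ⊢
  linear_combination -h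

lemma Jd_neg (ν : ℤ) (z : ℂ) (hz : z ≠ 0) : Jd (-ν) z = (-1:ℂ)^ν * Jd ν z := by
  rw [Jd, Jd_alt ν z hz]
  have e1 : -ν + 1 = -(ν - 1) := by ring
  rw [e1, besselJX_neg, besselJX_neg]
  have e2 : ((-1:ℂ)^(ν-1)) = -((-1:ℂ)^ν) := by
    have := neg_one_zpow_succ (ν-1)
    rw [show ν - 1 + 1 = ν by ring] at this
    linear_combination this
  push_cast
  rw [e2]
  ring

lemma hasDerivAt_besselJX_nat (n : ℕ) (z : ℂ) (hz : z ≠ 0) :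
    HasDerivAt (besselJX (n:ℤ)) (Jd (n:ℤ) z) z := by
  rw [besselJX_coe]
  have h := hasDerivAt_besselJNat' n z hz
  have hval : Jd (n:ℤ) z = (n:ℂ)/z * besselJNat n z - besselJNat (n+1) z := by
    rw [Jd, besselJX_coe, show ((n:ℤ)+1) = ((n+1 : ℕ) : ℤ) by push_cast; ring, besselJX_coe]
    push_cast
    ring_nf
  rwa [hval]

lemma hasDerivAt_besselJX (ν : ℤ) (z : ℂ) (hz : z ≠ 0) :
    HasDerivAt (besselJX ν) (Jd ν z) z := by
  rcases le_or_gt 0 ν with h | h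
  · obtain ⟨n, rfl⟩ : ∃ n : ℕ, ν = (n:ℤ) := ⟨ν.toNat, by omega⟩
    exact hasDerivAt_besselJX_nat n z hz
  · obtain ⟨n, hn⟩ : ∃ n : ℕ, ν = -((n:ℤ)) := ⟨(-ν).toNat, by omega⟩
    subst hn
    have hfun : besselJX (-(n:ℤ)) = fun w => (-1:ℂ)^((n:ℤ)) * besselJX ((n:ℤ)) w := by
      funext w; exact besselJX_neg _ w
    rw [hfun]
    have hd := (hasDerivAt_besselJX_nat n z hz).const_mul ((-1:ℂ)^((n:ℤ)))
    rwa [← Jd_neg (n:ℤ) z hz] at hd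

lemma hasDerivAt_Jd (ν : ℤ) (z : ℂ) (hz : z ≠ 0) :
    HasDerivAt (Jd ν) (-(Jd ν z)/z - (1 - (ν:ℂ)^2/z^2) * besselJX ν z) z := by
  have h1 : HasDerivAt (fun w : ℂ => (ν:ℂ)/w) (-((ν:ℂ)/z^2)) z := by
    have h := (hasDerivAt_inv hz).const_mul (ν:ℂ)
    simp only [div_eq_mul_inv]
    refine h.congr_deriv ?_
    ring
  have h2 := (h1.mul (hasDerivAt_besselJX ν z hz)).sub (hasDerivAt_besselJX (ν+1) z hz)
  have hfun : (fun w => (ν:ℂ)/w * besselJX ν w - besselJX (ν+1) w) = Jd ν := rfl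
  change HasDerivAt (Jd ν) _ z at h2
  have hA' : besselJX (ν+1) z = (ν:ℂ)/z * besselJX ν z - Jd ν z := by rw [Jd]; ring
  have hTT := besselJX_threeterm (ν+1) z hz
  rw [show ν+1-1 = ν by ring, show ν+1+1 = ν+2 by ring] at hTT
  push_cast at hTT
  have hJ2 : besselJX (ν+2) z = 2*((ν:ℂ)+1)/z * besselJX (ν+1) z - besselJX ν z := by
    linear_combination hTT
  have hJd1 : Jd (ν+1) z = ((ν:ℂ)+1)/z * besselJX (ν+1) z - besselJX (ν+2) z := by
    rw [Jd, show ν+1+1 = ν+2 by ring]; push_cast; ring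
  have hval : -((ν:ℂ)/z^2) * besselJX ν z + (ν:ℂ)/z * Jd ν z - Jd (ν+1) z
      = -(Jd ν z)/z - (1 - (ν:ℂ)^2/z^2) * besselJX ν z := by
    rw [hJd1, hJ2, hA']
    field_simp
    ring
  rwa [hval] at h2

lemma conj_tsum_bessel (f : ℕ → ℂ) (hf : Summable f) :
    (starRingEnd ℂ) (∑' r, f r) = ∑' r, (starRingEnd ℂ) (f r) :=
  (hf.hasSum.map (starRingEnd ℂ) Complex.continuous_conj).tsum_eq.symm

lemma besselJNat_conj (n : ℕ) (z : ℂ) :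
    besselJNat n ((starRingEnd ℂ) z) = (starRingEnd ℂ) (besselJNat n z) := by
  rw [besselJNat_eq, besselJNat_eq, conj_tsum_bessel _ (summable_besselTerm n (z/2))]
  refine tsum_congr fun r => ?_
  have hbc : (starRingEnd ℂ) (bc n r) = bc n r := by
    simp only [bc, map_div₀, map_mul, map_pow, map_neg, map_one, Complex.conj_natCast]
  rw [map_mul, map_pow, map_div₀, hbc, map_ofNat]

lemma besselJX_conj (n : ℤ) (z : ℂ) :
    besselJX n ((starRingEnd ℂ) z) = (starRingEnd ℂ) (besselJX n z) := by
  rcases le_or_gt 0 n with h | h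
  · simp only [besselJX, if_pos h, besselJNat_conj]
  · simp only [besselJX, if_neg (not_le.2 h), besselJNat_conj, map_mul]
    congr 1
    rw [map_zpow₀]
    simp

lemma besselJX_real (n : ℤ) (x : ℝ) :
    besselJX n (x:ℂ) = (((besselJX n (x:ℂ)).re : ℝ) : ℂ) := by
  have h := besselJX_conj n (x:ℂ)
  rw [Complex.conj_ofReal] at h
  exact (Complex.conj_eq_iff_re.1 h.symm).symm

lemma Jd_conj (n : ℤ) (z : ℂ) :
    Jd n ((starRingEnd ℂ) z) = (starRingEnd ℂ) (Jd n z) := by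
  rw [Jd, Jd, map_sub, map_mul, map_div₀, besselJX_conj, besselJX_conj]
  simp

lemma Jd_real (n : ℤ) (x : ℝ) : Jd n (x:ℂ) = (((Jd n (x:ℂ)).re : ℝ) : ℂ) := by
  have h := Jd_conj n (x:ℂ)
  rw [Complex.conj_ofReal] at h
  exact (Complex.conj_eq_iff_re.1 h.symm).symm

lemma besselJNat_neg_arg (n : ℕ) (z : ℂ) :
    besselJNat n (-z) = (-1:ℂ)^n * besselJNat n z := by
  rw [besselJNat_eq, besselJNat_eq, ← tsum_mul_left]
  refine tsum_congr fun r => ?_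
  have : (-z/2 : ℂ) = -(z/2) := by ring
  rw [this, neg_pow]
  have : (-1:ℂ)^(n+2*r) = (-1:ℂ)^n := by
    rw [pow_add, pow_mul]
    norm_num
  rw [this]
  ring

lemma besselJX_neg_arg (n : ℤ) (z : ℂ) :
    besselJX n (-z) = (-1:ℂ)^n * besselJX n z := by
  rcases le_or_gt 0 n with h | h
  · simp only [besselJX, if_pos h, besselJNat_neg_arg]
    congr 1
    rw [← zpow_natCast (-1:ℂ) n.toNat]
    congr 1
    omega
  · simp only [besselJX, if_neg (not_le.2 h), besselJNat_neg_arg]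
    rw [← zpow_natCast (-1:ℂ) (-n).toNat, show (((-n).toNat : ℤ)) = -n by omega, neg_one_zpow_neg]

lemma Jd_neg_arg (n : ℤ) (z : ℂ) : Jd n (-z) = -((-1:ℂ)^n) * Jd n z := by
  rw [Jd, Jd, besselJX_neg_arg, besselJX_neg_arg, neg_one_zpow_succ]
  ring

noncomputable def uR (n : ℤ) (x : ℝ) : ℝ := (besselJX n (x:ℂ)).re
noncomputable def vR (n : ℤ) (x : ℝ) : ℝ := (Jd n (x:ℂ)).re

lemma besselJX_real' (n : ℤ) (x : ℝ) : besselJX n (x:ℂ) = ((uR n x : ℝ) : ℂ) :=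
  besselJX_real n x

lemma Jd_real' (n : ℤ) (x : ℝ) : Jd n (x:ℂ) = ((vR n x : ℝ) : ℂ) := Jd_real n x

lemma continuous_uR (n : ℤ) : Continuous (uR n) :=
  Complex.continuous_re.comp ((differentiable_besselJX n).continuous.comp Complex.continuous_ofReal)

lemma hasDerivAt_uR (n : ℤ) (x : ℝ) (hx : x ≠ 0) :
    HasDerivAt (uR n) (vR n x) x := by
  have h := hasDerivAt_besselJX n (x:ℂ) (by exact_mod_cast hx)
  exact h.real_of_complex

lemma hasDerivAt_vR (n : ℤ) (x : ℝ) (hx : x ≠ 0) :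
    HasDerivAt (vR n) (-(vR n x)/x - (1 - (n:ℝ)^2/x^2) * uR n x) x := by
  have h := (hasDerivAt_Jd n (x:ℂ) (by exact_mod_cast hx)).real_of_complex
  have hval : (-(Jd n (x:ℂ))/(x:ℂ) - (1 - ((n:ℤ):ℂ)^2/(x:ℂ)^2) * besselJX n (x:ℂ)).re
      = -(vR n x)/x - (1 - (n:ℝ)^2/x^2) * uR n x := by
    rw [Jd_real' n x, besselJX_real' n x]
    have : (-(((vR n x : ℝ)):ℂ)/(x:ℂ) - (1 - ((n:ℤ):ℂ)^2/(x:ℂ)^2) * ((uR n x : ℝ):ℂ))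
        = (((-(vR n x)/x - (1 - (n:ℝ)^2/x^2) * uR n x : ℝ)) : ℂ) := by
      push_cast
      ring
    rw [this, Complex.ofReal_re]
  rwa [hval] at h

lemma x_mul_vR (n : ℤ) (x : ℝ) (hx : x ≠ 0) :
    x * vR n x = (n:ℝ) * uR n x - x * uR (n+1) x := by
  have hxc : (x:ℂ) ≠ 0 := by exact_mod_cast hx
  have h : (x:ℂ) * Jd n (x:ℂ) = ((n:ℤ):ℂ) * besselJX n (x:ℂ) - (x:ℂ) * besselJX (n+1) (x:ℂ) := by
    rw [Jd]
    field_simp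
  rw [Jd_real', besselJX_real' n x, besselJX_real' (n+1) x] at h
  have h2 : (((x * vR n x : ℝ)):ℂ) = (((n:ℝ) * uR n x - x * uR (n+1) x : ℝ) : ℂ) := by
    push_cast at h ⊢
    linear_combination h
  exact_mod_cast h2

lemma energy_pos_of_pos (n : ℤ) (x : ℝ) (hx : 0 < x) (hu : uR n x ≠ 0) :
    0 < x^2 * (vR n x)^2 + (x^2 - (n:ℝ)^2) * (uR n x)^2 := by
  set τ : ℝ → ℝ := fun y => (n:ℝ) * uR n y - y * uR (n+1) y with hτ
  set F : ℝ → ℝ := fun y => (τ y)^2 + (y^2 - (n:ℝ)^2) * (uR n y)^2 with hF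
  have hτcont : Continuous τ := by
    exact (continuous_const.mul (continuous_uR n)).sub (continuous_id.mul (continuous_uR (n+1)))
  have hFcont : Continuous F := by
    exact (hτcont.pow 2).add (((continuous_pow 2).sub continuous_const).mul ((continuous_uR n).pow 2))
  have hF0 : F 0 = 0 := by
    simp only [hF, hτ]
    ring
  have hτ_eq : ∀ y : ℝ, y ≠ 0 → τ y = y * vR n y := fun y hy => (x_mul_vR n y hy).symm
  have hFderiv : ∀ y : ℝ, y ≠ 0 → HasDerivAt F (2*y*(uR n y)^2) y := by
    intro y hy
    have hu' := hasDerivAt_uR n y hy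
    have hv' := hasDerivAt_vR n y hy
    have hτd : HasDerivAt τ (vR n y + y * (-(vR n y)/y - (1 - (n:ℝ)^2/y^2) * uR n y)) y := by
      have hev : τ =ᶠ[nhds y] (fun t => t * vR n t) := by
        filter_upwards [eventually_ne_nhds hy] with t ht
        exact hτ_eq t ht
      rw [hev.hasDerivAt_iff]
      exact ((hasDerivAt_id y).mul hv').congr_deriv (by simp)
    have h1 : HasDerivAt (fun t : ℝ => (τ t)^2) (2 * τ y * (vR n y + y * (-(vR n y)/y - (1 - (n:ℝ)^2/y^2) * uR n y))) y := by
      have := hτd.pow 2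
      refine this.congr_deriv ?_
      push_cast
      ring
    have h2 : HasDerivAt (fun t : ℝ => (t^2 - (n:ℝ)^2) * (uR n t)^2)
        (2*y * (uR n y)^2 + (y^2 - (n:ℝ)^2) * (2 * uR n y * vR n y)) y := by
      have ha : HasDerivAt (fun t : ℝ => t^2 - (n:ℝ)^2) (2*y) y := by
        have := (hasDerivAt_pow 2 y).sub_const ((n:ℝ)^2)
        refine this.congr_deriv ?_
        push_cast; ring
      have hb : HasDerivAt (fun t : ℝ => (uR n t)^2) (2 * uR n y * vR n y) y := by
        have := hu'.pow 2
        refine this.congr_deriv ?_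
        push_cast; ring
      exact ha.mul hb
    have hsum := h1.add h2
    have hval : 2 * τ y * (vR n y + y * (-(vR n y)/y - (1 - (n:ℝ)^2/y^2) * uR n y))
        + (2*y * (uR n y)^2 + (y^2 - (n:ℝ)^2) * (2 * uR n y * vR n y)) = 2*y*(uR n y)^2 := by
      rw [hτ_eq y hy]
      field_simp
      ring
    rwa [hval] at hsum
  have hmono : MonotoneOn F (Set.Icc 0 x) := by
    refine monotoneOn_of_deriv_nonneg (convex_Icc 0 x) hFcont.continuousOn ?_ ?_
    · intro y hy
      rw [interior_Icc] at hy
      exact ((hFderiv y (ne_of_gt hy.1)).differentiableAt).differentiableWithinAt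
    · intro y hy
      rw [interior_Icc] at hy
      rw [(hFderiv y (ne_of_gt hy.1)).deriv]
      have hy0 : (0:ℝ) < y := hy.1
      positivity
  -- find δ
  have hev : ∀ᶠ y in nhds x, uR n y ≠ 0 := ((continuous_uR n).continuousAt).eventually_ne hu
  obtain ⟨ε, hε, hball⟩ := Metric.eventually_nhds_iff.1 hev
  set δ : ℝ := min (ε/2) (x/2) with hδ
  have hδ0 : 0 < δ := by
    apply lt_min <;> linarith
  have hδx : x - δ > 0 := by
    have : δ ≤ x/2 := min_le_right _ _
    linarith
  have hstrict : StrictMonoOn F (Set.Icc (x - δ) x) := by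
    refine strictMonoOn_of_deriv_pos (convex_Icc _ _) hFcont.continuousOn ?_
    intro y hy
    rw [interior_Icc] at hy
    have hy0 : 0 < y := lt_trans hδx hy.1
    rw [(hFderiv y (ne_of_gt hy0)).deriv]
    have hyne : uR n y ≠ 0 := by
      apply hball
      rw [Real.dist_eq, abs_lt]
      constructor
      · have : δ ≤ ε/2 := min_le_left _ _
        linarith [hy.1]
      · linarith [hy.2, hε]
    positivity
  have hFx1 : F (x - δ) < F x := by
    apply hstrict (Set.mem_Icc.2 ⟨le_refl _, by linarith⟩) (Set.mem_Icc.2 ⟨by linarith, le_refl _⟩)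
    linarith
  have hFx0 : F 0 ≤ F (x - δ) := by
    apply hmono (Set.mem_Icc.2 ⟨le_refl _, le_of_lt hx⟩) (Set.mem_Icc.2 ⟨by linarith, by linarith⟩)
    linarith
  have hFxpos : 0 < F x := by
    rw [hF0] at hFx0
    linarith
  have : F x = x^2 * (vR n x)^2 + (x^2 - (n:ℝ)^2) * (uR n x)^2 := by
    simp only [hF]
    rw [hτ_eq x (ne_of_gt hx)]
    ring
  linarith [this ▸ hFxpos]

lemma neg_one_zpow_sq_real (n : ℤ) : ((-1:ℝ)^n) * ((-1:ℝ)^n) = 1 := by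
  rw [← zpow_add₀ (by norm_num : (-1:ℝ) ≠ 0), show n + n = 2*n by ring, zpow_mul]
  norm_num

lemma uR_neg (n : ℤ) (x : ℝ) : uR n (-x) = ((-1:ℝ)^n) * uR n x := by
  have h1 : ((-x : ℝ) : ℂ) = -(x:ℂ) := by push_cast; ring
  rw [uR, h1, besselJX_neg_arg, besselJX_real' n x]
  have h2 : ((-1:ℂ)^n) = (((-1:ℝ)^n : ℝ) : ℂ) := by
    rw [Complex.ofReal_zpow]
    norm_num
  rw [h2, ← Complex.ofReal_mul, Complex.ofReal_re]

lemma vR_neg (n : ℤ) (x : ℝ) : vR n (-x) = -((-1:ℝ)^n) * vR n x := by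
  have h1 : ((-x : ℝ) : ℂ) = -(x:ℂ) := by push_cast; ring
  rw [vR, h1, Jd_neg_arg, Jd_real' n x]
  have h2 : ((-1:ℂ)^n) = (((-1:ℝ)^n : ℝ) : ℂ) := by
    rw [Complex.ofReal_zpow]
    norm_num
  rw [h2]
  have : -((((-1:ℝ)^n : ℝ)) : ℂ) * (((vR n x : ℝ)) : ℂ) = (((-((-1:ℝ)^n) * vR n x : ℝ)) : ℂ) := by
    push_cast; ring
  rw [this, Complex.ofReal_re]

lemma energy_pos (n : ℤ) (x : ℝ) (hx : x ≠ 0) (hu : uR n x ≠ 0) :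
    0 < x^2 * (vR n x)^2 + (x^2 - (n:ℝ)^2) * (uR n x)^2 := by
  rcases lt_or_gt_of_ne hx with h | h
  · have hpos : 0 < -x := by linarith
    have hsq := neg_one_zpow_sq_real n
    have hune : uR n (-x) ≠ 0 := by
      rw [uR_neg]
      intro hc
      rcases mul_eq_zero.1 hc with h1 | h2
      · rw [h1] at hsq; norm_num at hsq
      · exact hu h2
    have := energy_pos_of_pos n (-x) hpos hune
    rw [uR_neg, vR_neg] at this
    nlinarith [this, hsq]
  · exact energy_pos_of_pos n x h hu

lemma besselJ_eq_X : besselJ = besselJX := rfl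

set_option maxHeartbeats 2000000 in
theorem stmt12 (m : ℕ) (ν : ℤ) (lam : ℂ) (hlam : lam ≠ 0)
    (hzero : besselLd m ν lam = 0)
    (hJ : besselJ ν lam * besselJ (ν - m) lam ≠ 0) :
    deriv (besselLd m ν) lam =
      besselJ ν lam * besselJ (ν - m) lam *
        (deriv (besselJ ν) lam ^ 2 / besselJ ν lam ^ 2 +
          deriv (besselJ (ν - m)) lam ^ 2 / besselJ (ν - m) lam ^ 2 +
          2 - (((ν : ℂ) - m) ^ 2 + (ν : ℂ) ^ 2) / lam ^ 2) ∧
    (lam.im = 0 → deriv (besselLd m ν) lam ≠ 0) := by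
  rw [besselJ_eq_X] at hJ ⊢
  set μ : ℤ := ν - m with hμ
  have hμc : ((μ : ℤ) : ℂ) = (ν : ℂ) - m := by rw [hμ]; push_cast; ring
  -- Q function
  set Q : ℂ → ℂ := fun w => Jd ν w * besselJX μ w + besselJX ν w * Jd μ w with hQdef
  have hP : ∀ w : ℂ, w ≠ 0 → HasDerivAt (fun w => besselJX ν w * besselJX μ w) (Q w) w :=
    fun w hw => (hasDerivAt_besselJX ν w hw).mul (hasDerivAt_besselJX μ w hw)
  -- key simplification of besselLd away from 0
  have hLd : ∀ w : ℂ, w ≠ 0 → besselLd m ν w =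
      (m : ℂ) * (besselJX ν w * besselJX μ w) * w⁻¹ - Q w := by
    intro w hw
    rw [besselLd, besselJ_eq_X]
    have hzpow := hasDerivAt_zpow (-(m:ℤ)) w (Or.inl hw)
    have hprod := hzpow.mul (hP w hw)
    rw [HasDerivAt.deriv (f := fun w : ℂ => w ^ (-(m:ℤ)) * (besselJX ν w * besselJX (ν - m) w)) hprod]
    have hwm : w ^ (m:ℕ) * w ^ (-(m:ℤ)) = 1 := by
      rw [← zpow_natCast w m, ← zpow_add₀ hw]
      simp
    have hsplit : w ^ (-(m:ℤ)-1) = w ^ (-(m:ℤ)) * w⁻¹ := by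
      rw [zpow_sub_one₀ hw]
    rw [hsplit]
    have expand : -w ^ (m:ℕ) * (((-(m:ℤ) : ℤ) : ℂ) * (w ^ (-(m:ℤ)) * w⁻¹) * (besselJX ν w * besselJX μ w)
        + w ^ (-(m:ℤ)) * Q w)
        = (w ^ (m:ℕ) * w ^ (-(m:ℤ))) * ((m : ℂ) * (besselJX ν w * besselJX μ w) * w⁻¹ - Q w) := by
      push_cast
      ring
    rw [expand, hwm, one_mul]
  have hev : besselLd m ν =ᶠ[nhds lam] (fun w => (m : ℂ) * (besselJX ν w * besselJX μ w) * w⁻¹ - Q w) := by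
    filter_upwards [eventually_ne_nhds hlam] with w hw
    exact hLd w hw
  -- abbreviations
  set A := besselJX ν lam with hA
  set B := besselJX μ lam with hB
  set A' := Jd ν lam with hA'
  set B' := Jd μ lam with hB'
  have hAne : A ≠ 0 := fun h => hJ (by rw [h, zero_mul])
  have hBne : B ≠ 0 := fun h => hJ (by rw [h, mul_zero])
  -- zero of L
  have hkey : A' * B + A * B' = (m : ℂ) * A * B * lam⁻¹ := by
    have h0 := hzero
    rw [hLd lam hlam] at h0
    have h3 : Q lam = A' * B + A * B' := rfl
    rw [h3] at h0
    linear_combination -h0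
  -- derivative of Q
  have hQd : HasDerivAt Q
      ((-(A')/lam - (1 - (ν:ℂ)^2/lam^2) * A) * B + A' * B' +
        (A' * B' + A * (-(B')/lam - (1 - ((μ:ℤ):ℂ)^2/lam^2) * B))) lam :=
    ((hasDerivAt_Jd ν lam hlam).mul (hasDerivAt_besselJX μ lam hlam)).add
      ((hasDerivAt_besselJX ν lam hlam).mul (hasDerivAt_Jd μ lam hlam))
  -- derivative of L
  have hL : HasDerivAt (fun w => (m : ℂ) * (besselJX ν w * besselJX μ w) * w⁻¹ - Q w)
      (((m : ℂ) * Q lam) * lam⁻¹ + ((m : ℂ) * (A * B)) * (-(lam^2)⁻¹) -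
        ((-(A')/lam - (1 - (ν:ℂ)^2/lam^2) * A) * B + A' * B' +
          (A' * B' + A * (-(B')/lam - (1 - ((μ:ℤ):ℂ)^2/lam^2) * B)))) lam := by
    exact (((hP lam hlam).const_mul (m:ℂ)).mul (hasDerivAt_inv hlam)).sub hQd
  have hderiv : deriv (besselLd m ν) lam =
      ((m : ℂ) * Q lam) * lam⁻¹ + ((m : ℂ) * (A * B)) * (-(lam^2)⁻¹) -
        ((-(A')/lam - (1 - (ν:ℂ)^2/lam^2) * A) * B + A' * B' +
          (A' * B' + A * (-(B')/lam - (1 - ((μ:ℤ):ℂ)^2/lam^2) * B))) := by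
    rw [hev.deriv_eq, hL.deriv]
  have hQlam : Q lam = A' * B + A * B' := rfl
  rw [hQlam] at hderiv
  have hdJν : deriv (besselJX ν) lam = A' := (hasDerivAt_besselJX ν lam hlam).deriv
  have hdJμ : deriv (besselJX μ) lam = B' := (hasDerivAt_besselJX μ lam hlam).deriv
  -- B' in terms of the rest
  clear hL hQd hev hLd hP hzero hQlam hQdef
  clear_value A B A' B' μ Q
  clear Q
  have main : deriv (besselLd m ν) lam =
      A * B * (A' ^ 2 / A ^ 2 + B' ^ 2 / B ^ 2 + 2 - (((ν : ℂ) - m) ^ 2 + (ν : ℂ) ^ 2) / lam ^ 2) := by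
    rw [hderiv, ← hμc]
    have e2 : A * A⁻¹ = 1 := mul_inv_cancel₀ hAne
    have e3 : B * B⁻¹ = 1 := mul_inv_cancel₀ hBne
    linear_combination (((m:ℂ)+1)*lam⁻¹ - A⁻¹*B⁻¹*((m:ℂ)*A*B*lam⁻¹ + A'*B + A*B')) * hkey
      + (-(((m:ℂ))^2*A*B*lam⁻¹^2 - 2*A'*B') - A'^2*A⁻¹*B + B'^2*B⁻¹*A) * e2
      + (-(A*A⁻¹*(((m:ℂ))^2*A*B*lam⁻¹^2 - 2*A'*B')) + A'^2*A⁻¹*B - B'^2*B⁻¹*A) * e3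
  constructor
  · rw [hdJν, hdJμ]
    exact main
  · intro him
    rw [main]
    -- real case
    set x : ℝ := lam.re with hx
    have hlamx : lam = (x:ℂ) := by
      apply Complex.ext
      · simp [hx]
      · simp [him]
    have hxne : x ≠ 0 := by
      intro h
      apply hlam
      rw [hlamx, h]
      norm_num
    have hAr : A = ((uR ν x : ℝ) : ℂ) := by rw [hA, hlamx]; exact besselJX_real' ν x
    have hBr : B = ((uR μ x : ℝ) : ℂ) := by rw [hB, hlamx]; exact besselJX_real' μ x
    have hA'r : A' = ((vR ν x : ℝ) : ℂ) := by rw [hA', hlamx]; exact Jd_real' ν x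
    have hB'r : B' = ((vR μ x : ℝ) : ℂ) := by rw [hB', hlamx]; exact Jd_real' μ x
    have hane : uR ν x ≠ 0 := by
      intro h; apply hAne; rw [hAr, h]; norm_num
    have hbne : uR μ x ≠ 0 := by
      intro h; apply hBne; rw [hBr, h]; norm_num
    set s : ℝ := (vR ν x)^2/(uR ν x)^2 + (vR μ x)^2/(uR μ x)^2 + 2 - (((μ:ℤ):ℝ)^2 + (ν:ℝ)^2)/x^2 with hs
    have hSval : (A' ^ 2 / A ^ 2 + B' ^ 2 / B ^ 2 + 2 - (((ν : ℂ) - m) ^ 2 + (ν : ℂ) ^ 2) / lam ^ 2)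
        = ((s : ℝ) : ℂ) := by
      rw [hAr, hBr, hA'r, hB'r, hlamx, ← hμc, hs]
      push_cast
      ring
    have hE1 := energy_pos ν x hxne hane
    have hE2 := energy_pos μ x hxne hbne
    have hspos : 0 < s := by
      have hdecomp : s = (x^2 * (vR ν x)^2 + (x^2 - (ν:ℝ)^2) * (uR ν x)^2) / (x^2 * (uR ν x)^2)
          + (x^2 * (vR μ x)^2 + (x^2 - ((μ:ℤ):ℝ)^2) * (uR μ x)^2) / (x^2 * (uR μ x)^2) := by
        rw [hs]
        field_simp
        ring
      rw [hdecomp]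
      have d1 : (0:ℝ) < x^2 * (uR ν x)^2 := by positivity
      have d2 : (0:ℝ) < x^2 * (uR μ x)^2 := by positivity
      exact add_pos (div_pos hE1 d1) (div_pos hE2 d2)
    rw [hSval]
    apply mul_ne_zero (mul_ne_zero hAne hBne)
    exact_mod_cast ne_of_gt hspos
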